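/- Let φ be holomorphic on the unit disk 𝔻 with finite weighted L² norm, i.e., ∫_𝔻 |φ(z)|² ρ_𝔻(z)⁻¹ d²z < ∞ where ρ_𝔻(z) = 4/(1−|z|²)². Then the weighted sup-norm is controlled by the weighted L²-norm: sup_{z∈𝔻} |φ(z)|ρ_𝔻(z)⁻¹ ≤ √(3/(4π)) · (∫_𝔻 |φ(z)|² ρ_𝔻(z)⁻¹ d²z)^{1/2}. In particular A₂(𝔻) ⊆ A_∞(𝔻). -/

import Mathlib

open Complex Metric Set MeasureTheory
open intervalIntegral
open scoped NNReal ENNReal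


lemma exp_orth (m : ℤ) :
    ∫ θ in (0:ℝ)..2*Real.pi, Complex.exp (m * θ * Complex.I)
      = if m = 0 then (2*Real.pi : ℂ) else 0 := by
  rcases eq_or_ne m 0 with rfl | hm
  · simp [two_mul, Real.pi_nonneg]
  · rw [if_neg hm]
    have hc : (m : ℂ) * Complex.I ≠ 0 := by
      simp [hm, Complex.I_ne_zero]
    have h := integral_exp_mul_complex (a := (0:ℝ)) (b := 2*Real.pi) hc
    have h2 : (∫ θ in (0:ℝ)..2*Real.pi, Complex.exp (m * θ * Complex.I))
        = ∫ θ in (0:ℝ)..2*Real.pi, Complex.exp ((m:ℂ) * Complex.I * θ) :=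
      intervalIntegral.integral_congr (fun θ _ => by ring_nf)
    rw [h2, h]
    have : Complex.exp ((m:ℂ) * Complex.I * (2*Real.pi)) = 1 := by
      rw [show (m:ℂ) * Complex.I * (2*Real.pi) = m * (2 * Real.pi * Complex.I) by ring]
      exact Complex.exp_int_mul_two_pi_mul_I m
    simp [this]
lemma bessel (f : ℝ → ℂ) (hf : Continuous f) (N : ℕ) (c : ℕ → ℂ)
    (hc : ∀ n : ℕ, (∫ θ in (0:ℝ)..2*Real.pi, Complex.exp (-(n:ℂ) * θ * Complex.I) * f θ)
        = 2*Real.pi * c n) :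
    2*Real.pi * ∑ n ∈ Finset.range N, ‖c n‖^2 ≤ ∫ θ in (0:ℝ)..2*Real.pi, ‖f θ‖^2 := by
  have h2π : (0:ℝ) ≤ 2*Real.pi := by positivity
  set s : ℝ → ℂ := fun θ => ∑ n ∈ Finset.range N, c n * Complex.exp (n * θ * Complex.I) with hs
  have hexp : ∀ z : ℂ, Continuous fun θ : ℝ => Complex.exp (z * θ * Complex.I) := by
    intro z
    exact Complex.continuous_exp.comp
      (((continuous_const.mul Complex.continuous_ofReal).mul continuous_const))
  have hconts : Continuous s := by
    apply continuous_finset_sum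
    intro n _
    exact continuous_const.mul (hexp n)
  have hconj : ∀ g : ℝ → ℂ, Continuous g → Continuous fun θ => (starRingEnd ℂ) (g θ) :=
    fun g hg => continuous_star.comp hg
  have conj_exp : ∀ (k : ℕ) (θ : ℝ), (starRingEnd ℂ) (Complex.exp (k * θ * Complex.I))
      = Complex.exp (-(k:ℂ) * θ * Complex.I) := by
    intro k θ
    rw [← Complex.exp_conj]
    congr 1
    simp only [map_mul, Complex.conj_I, Complex.conj_ofReal, map_natCast]
    ring
  have orth : ∀ j k : ℕ, (∫ θ in (0:ℝ)..2*Real.pi,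
      Complex.exp (j * θ * Complex.I) * (starRingEnd ℂ) (Complex.exp (k * θ * Complex.I)))
      = if j = k then (2*Real.pi:ℂ) else 0 := by
    intro j k
    have hpt : ∀ θ : ℝ, Complex.exp (j * θ * Complex.I) *
        (starRingEnd ℂ) (Complex.exp (k * θ * Complex.I))
        = Complex.exp ((((j:ℤ) - (k:ℤ) : ℤ):ℂ) * θ * Complex.I) := by
      intro θ
      rw [conj_exp, ← Complex.exp_add]
      congr 1
      push_cast
      ring
    rw [intervalIntegral.integral_congr (fun θ _ => hpt θ), exp_orth]
    simp [sub_eq_zero]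
  set W : ℝ := 2*Real.pi * ∑ n ∈ Finset.range N, ‖c n‖^2 with hW
  have normSq_cast : ∀ z : ℂ, z * (starRingEnd ℂ) z = ((‖z‖^2 : ℝ) : ℂ) := by
    intro z
    rw [Complex.mul_conj]
    norm_cast
    rw [Complex.normSq_eq_norm_sq]
  have hWc : ((W:ℝ):ℂ) = 2*Real.pi * ∑ n ∈ Finset.range N, ((‖c n‖^2 : ℝ):ℂ) := by
    rw [hW]; push_cast; ring
  -- B : ∫ f conj s
  have hB : (∫ θ in (0:ℝ)..2*Real.pi, f θ * (starRingEnd ℂ) (s θ)) = ((W:ℝ):ℂ) := by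
    have hpt : ∀ θ : ℝ, f θ * (starRingEnd ℂ) (s θ)
        = ∑ n ∈ Finset.range N,
            (starRingEnd ℂ) (c n) * (Complex.exp (-(n:ℂ) * θ * Complex.I) * f θ) := by
      intro θ
      simp only [hs, map_sum, map_mul, conj_exp, Finset.mul_sum]
      exact Finset.sum_congr rfl fun n _ => by ring
    rw [intervalIntegral.integral_congr (fun θ _ => hpt θ),
      intervalIntegral.integral_finset_sum (fun n _ =>
        ((show Continuous (fun θ : ℝ => (starRingEnd ℂ) (c n) * (Complex.exp (-(n:ℂ) * θ * Complex.I) * f θ)) from continuous_const.mul ((hexp (-(n:ℕ):ℂ)).mul hf)).intervalIntegrable _ _))]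
    rw [hWc, Finset.mul_sum]
    refine Finset.sum_congr rfl fun n _ => ?_
    rw [intervalIntegral.integral_const_mul, hc n, ← normSq_cast]
    ring
  have hB' : (∫ θ in (0:ℝ)..2*Real.pi, s θ * (starRingEnd ℂ) (f θ)) = ((W:ℝ):ℂ) := by
    have hpt : ∀ θ : ℝ, s θ * (starRingEnd ℂ) (f θ)
        = (starRingEnd ℂ) (f θ * (starRingEnd ℂ) (s θ)) := by
      intro θ; simp only [map_mul, Complex.conj_conj]; ring
    rw [intervalIntegral.integral_congr (fun θ _ => hpt θ),
      intervalIntegral.integral_of_le h2π, integral_conj,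
      ← intervalIntegral.integral_of_le h2π, hB, Complex.conj_ofReal]
  have hD : (∫ θ in (0:ℝ)..2*Real.pi, s θ * (starRingEnd ℂ) (s θ)) = ((W:ℝ):ℂ) := by
    have hpt : ∀ θ : ℝ, s θ * (starRingEnd ℂ) (s θ)
        = ∑ j ∈ Finset.range N, ∑ k ∈ Finset.range N,
            (c j * (starRingEnd ℂ) (c k)) *
              (Complex.exp (j * θ * Complex.I) *
                (starRingEnd ℂ) (Complex.exp (k * θ * Complex.I))) := by
      intro θ
      rw [hs]
      simp only [map_sum]
      rw [Finset.sum_mul_sum]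
      exact Finset.sum_congr rfl fun j _ => Finset.sum_congr rfl fun k _ => by
        simp only [map_mul]; ring
    rw [intervalIntegral.integral_congr (fun θ _ => hpt θ)]
    rw [intervalIntegral.integral_finset_sum (fun j _ => (Continuous.intervalIntegrable (by
      apply continuous_finset_sum
      intro k _
      exact continuous_const.mul ((hexp (j:ℕ)).mul (hconj _ (hexp (k:ℕ))))) _ _))]
    have hj : ∀ j ∈ Finset.range N,
        (∫ θ in (0:ℝ)..2*Real.pi, ∑ k ∈ Finset.range N,
            (c j * (starRingEnd ℂ) (c k)) *
              (Complex.exp (j * θ * Complex.I) *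
                (starRingEnd ℂ) (Complex.exp (k * θ * Complex.I))))
        = 2*Real.pi * ((‖c j‖^2 : ℝ) : ℂ) := by
      intro j hjN
      rw [intervalIntegral.integral_finset_sum (fun k _ =>
        (show Continuous (fun θ : ℝ => (c j * (starRingEnd ℂ) (c k)) * (Complex.exp (j * θ * Complex.I) * (starRingEnd ℂ) (Complex.exp (k * θ * Complex.I)))) from continuous_const.mul ((hexp (j:ℕ)).mul (hconj _ (hexp (k:ℕ))))).intervalIntegrable _ _)]
      have : ∀ k ∈ Finset.range N,
          (∫ θ in (0:ℝ)..2*Real.pi, (c j * (starRingEnd ℂ) (c k)) *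
              (Complex.exp (j * θ * Complex.I) *
                (starRingEnd ℂ) (Complex.exp (k * θ * Complex.I))))
          = if k = j then 2*Real.pi * ((‖c j‖^2 : ℝ) : ℂ) else 0 := by
        intro k _
        rw [intervalIntegral.integral_const_mul, orth j k]
        rcases eq_or_ne k j with rfl | hkj
        · rw [if_pos rfl, if_pos rfl, ← normSq_cast]
          ring
        · rw [if_neg (fun h => hkj h.symm), if_neg hkj, mul_zero]
      rw [Finset.sum_congr rfl this, Finset.sum_ite_eq' (Finset.range N)]
      rw [if_pos hjN]
    rw [Finset.sum_congr rfl hj, hWc, Finset.mul_sum]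
  -- expansion
  have hA : (∫ θ in (0:ℝ)..2*Real.pi, f θ * (starRingEnd ℂ) (f θ))
      = ((∫ θ in (0:ℝ)..2*Real.pi, ‖f θ‖^2 : ℝ) : ℂ) := by
    rw [intervalIntegral.integral_congr (fun θ _ => normSq_cast (f θ))]
    rw [intervalIntegral.integral_ofReal]
  have hFS : (∫ θ in (0:ℝ)..2*Real.pi, (f θ - s θ) * (starRingEnd ℂ) (f θ - s θ))
      = ((∫ θ in (0:ℝ)..2*Real.pi, ‖f θ - s θ‖^2 : ℝ) : ℂ) := by
    rw [intervalIntegral.integral_congr (fun θ _ => normSq_cast (f θ - s θ))]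
    rw [intervalIntegral.integral_ofReal]
  have iff' : IntervalIntegrable (fun θ => f θ * (starRingEnd ℂ) (f θ)) volume 0 (2*Real.pi) :=
    (hf.mul (hconj _ hf)).intervalIntegrable _ _
  have ifs : IntervalIntegrable (fun θ => f θ * (starRingEnd ℂ) (s θ)) volume 0 (2*Real.pi) :=
    (hf.mul (hconj _ hconts)).intervalIntegrable _ _
  have isf : IntervalIntegrable (fun θ => s θ * (starRingEnd ℂ) (f θ)) volume 0 (2*Real.pi) :=
    (hconts.mul (hconj _ hf)).intervalIntegrable _ _
  have iss : IntervalIntegrable (fun θ => s θ * (starRingEnd ℂ) (s θ)) volume 0 (2*Real.pi) :=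
    (hconts.mul (hconj _ hconts)).intervalIntegrable _ _
  have hexpand : (∫ θ in (0:ℝ)..2*Real.pi, (f θ - s θ) * (starRingEnd ℂ) (f θ - s θ))
      = ((∫ θ in (0:ℝ)..2*Real.pi, ‖f θ‖^2 : ℝ) : ℂ) - ((W:ℝ):ℂ) := by
    have hpt : ∀ θ : ℝ, (f θ - s θ) * (starRingEnd ℂ) (f θ - s θ)
        = f θ * (starRingEnd ℂ) (f θ) - f θ * (starRingEnd ℂ) (s θ)
          - s θ * (starRingEnd ℂ) (f θ) + s θ * (starRingEnd ℂ) (s θ) := by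
      intro θ; simp only [map_sub]; ring
    rw [intervalIntegral.integral_congr (fun θ _ => hpt θ)]
    rw [intervalIntegral.integral_add ((iff'.sub ifs).sub isf) iss,
      intervalIntegral.integral_sub (iff'.sub ifs) isf,
      intervalIntegral.integral_sub iff' ifs, hA, hB, hB', hD]
    ring
  have hreal : (∫ θ in (0:ℝ)..2*Real.pi, ‖f θ - s θ‖^2)
      = (∫ θ in (0:ℝ)..2*Real.pi, ‖f θ‖^2) - W := by
    have := hFS.symm.trans hexpand
    rw [← Complex.ofReal_sub] at this
    exact_mod_cast this
  have hpos : (0:ℝ) ≤ ∫ θ in (0:ℝ)..2*Real.pi, ‖f θ - s θ‖^2 :=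
    intervalIntegral.integral_nonneg h2π (fun θ _ => by positivity)
  linarith [hreal, hpos]

lemma coeff_circle (φ : ℂ → ℂ) (r : ℝ) (hr0 : 0 < r) (n : ℕ) :
    (∫ θ in (0:ℝ)..2*Real.pi,
        Complex.exp (-(n:ℂ) * θ * Complex.I) * φ (r * Complex.exp (θ * Complex.I)))
      = 2*Real.pi * ((cauchyPowerSeries φ 0 r).coeff n * (r:ℂ)^n) := by
  have hrne : (r:ℂ) ≠ 0 := by exact_mod_cast hr0.ne'
  have hcoeff : (cauchyPowerSeries φ 0 r).coeff n
      = (2 * Real.pi * Complex.I : ℂ)⁻¹ •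
          ∮ z in C(0, r), (1 / (z - 0)) ^ n • (z - 0)⁻¹ • φ z := by
    exact cauchyPowerSeries_apply φ 0 r n 1
  have hcirc : (∮ z in C(0, r), (1 / (z - 0)) ^ n • (z - 0)⁻¹ • φ z)
      = ∫ θ in (0:ℝ)..2*Real.pi,
          deriv (circleMap 0 r) θ • ((1 / (circleMap 0 r θ - 0)) ^ n •
            (circleMap 0 r θ - 0)⁻¹ • φ (circleMap 0 r θ)) := rfl
  have hpt : ∀ θ : ℝ, deriv (circleMap 0 r) θ • ((1 / (circleMap 0 r θ - 0)) ^ n •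
      (circleMap 0 r θ - 0)⁻¹ • φ (circleMap 0 r θ))
      = Complex.I * ((r:ℂ)^n)⁻¹ *
          (Complex.exp (-(n:ℂ) * θ * Complex.I) * φ (r * Complex.exp (θ * Complex.I))) := by
    intro θ
    rw [deriv_circleMap, circleMap_zero]
    have hexpne : Complex.exp ((θ:ℂ) * Complex.I) ≠ 0 := Complex.exp_ne_zero _
    have hen : Complex.exp (-(n:ℂ) * θ * Complex.I) = (Complex.exp ((θ:ℂ) * Complex.I) ^ n)⁻¹ := by
      rw [← Complex.exp_nat_mul, ← Complex.exp_neg]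
      congr 1
      ring
    rw [hen]
    simp only [smul_eq_mul, sub_zero, mul_pow, one_div, mul_inv]
    field_simp
    rw [div_pow, div_pow, one_pow]
    field_simp
  rw [hcoeff, hcirc, intervalIntegral.integral_congr (fun θ _ => hpt θ),
    intervalIntegral.integral_const_mul]
  have hπ : (2 * Real.pi * Complex.I : ℂ) ≠ 0 := by
    simp [Real.pi_ne_zero, Complex.I_ne_zero]
  rw [smul_eq_mul]
  field_simp
  congr 1
  funext θ
  ring_nf

lemma choose2R (n : ℕ) : (((n+2).choose 2 : ℕ) : ℝ) * 2 = (n+1)*(n+2) := by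
  induction n with
  | zero => norm_num
  | succ n ih =>
    rw [show n+1+2 = (n+2)+1 by ring, Nat.choose_succ_succ (n+2) 1]
    push_cast [Nat.choose_one_right]
    push_cast at ih
    ring_nf
    ring_nf at ih
    nlinarith [ih]

lemma choose3R (n : ℕ) : (((n+3).choose 3 : ℕ) : ℝ) * 6 = (n+1)*(n+2)*(n+3) := by
  induction n with
  | zero => norm_num
  | succ n ih =>
    rw [show n+1+3 = (n+3)+1 by ring, Nat.choose_succ_succ (n+3) 2]
    push_cast
    push_cast at ih
    have h2 := choose2R (n+1)
    push_cast at h2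
    nlinarith [ih, h2]

lemma radial_int (n : ℕ) :
    ∫ r in (0:ℝ)..1, r^(2*n+1) * (1-r^2)^2 = 1/((n+1)*(n+2)*(n+3) : ℝ) := by
  have hpt : ∀ r : ℝ, r ∈ Set.uIcc (0:ℝ) 1 →
      r^(2*n+1) * (1-r^2)^2 = r^(2*n+1) - 2*r^(2*n+3) + r^(2*n+5) := by
    intro r _; ring
  rw [intervalIntegral.integral_congr hpt]
  have i1 : IntervalIntegrable (fun r : ℝ => r^(2*n+1)) volume 0 1 :=
    (continuous_pow _).intervalIntegrable _ _
  have i3 : IntervalIntegrable (fun r : ℝ => 2*r^(2*n+3)) volume 0 1 :=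
    (continuous_const.mul (continuous_pow _)).intervalIntegrable _ _
  have i5 : IntervalIntegrable (fun r : ℝ => r^(2*n+5)) volume 0 1 :=
    (continuous_pow _).intervalIntegrable _ _
  rw [intervalIntegral.integral_add (i1.sub i3) i5, intervalIntegral.integral_sub i1 i3,
    intervalIntegral.integral_const_mul, integral_pow, integral_pow, integral_pow]
  push_cast
  have h1 : (2*(n:ℝ)+1+1) ≠ 0 := by positivity
  have h3 : (2*(n:ℝ)+3+1) ≠ 0 := by positivity
  have h5 : (2*(n:ℝ)+5+1) ≠ 0 := by positivity
  have p1 : (0:ℝ) < (n:ℝ)+1 := by positivity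
  have p2 : (0:ℝ) < (n:ℝ)+2 := by positivity
  have p3 : (0:ℝ) < (n:ℝ)+3 := by positivity
  field_simp
  ring

lemma geom_sum_bound (N : ℕ) (x : ℝ) (hx0 : 0 ≤ x) (hx1 : x < 1) :
    ∑ n ∈ Finset.range N, (((n+3).choose 3 : ℕ) : ℝ) * x^n ≤ (1-x)⁻¹^4 := by
  have hs : HasSum (fun n : ℕ => (((n+3).choose 3 : ℕ) : ℝ) * x^n) (1/(1-x)^4) := by
    have := hasSum_choose_mul_geometric_of_norm_lt_one (𝕜 := ℝ) 3 (r := x)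
      (by rwa [Real.norm_eq_abs, _root_.abs_of_nonneg hx0])
    simpa using this
  have := Summable.sum_le_tsum (Finset.range N)
    (fun n _ => by positivity) hs.summable
  rw [hs.tsum_eq] at this
  calc ∑ n ∈ Finset.range N, (((n+3).choose 3 : ℕ) : ℝ) * x^n ≤ 1/(1-x)^4 := this
    _ = (1-x)⁻¹^4 := by rw [inv_pow, one_div]

lemma polar_integrableOn (F : ℂ → ℝ) (hF : Integrable F) :
    IntegrableOn (fun p : ℝ × ℝ => p.1 * F (Complex.polarCoord.symm p)) polarCoord.target := by
  have hG : Integrable (fun q : ℝ × ℝ => F (Complex.measurableEquivRealProd.symm q)) :=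
    ((MeasurePreserving.symm _ Complex.volume_preserving_equiv_real_prod).integrable_comp_emb
      Complex.measurableEquivRealProd.symm.measurableEmbedding).2 hF
  set B : ℝ × ℝ → ℝ × ℝ →L[ℝ] ℝ × ℝ := fun p =>
    LinearMap.toContinuousLinearMap (Matrix.toLin (Module.Basis.finTwoProd ℝ) (Module.Basis.finTwoProd ℝ)
      !![Real.cos p.2, -p.1 * Real.sin p.2; Real.sin p.2, p.1 * Real.cos p.2]) with hB
  have A : ∀ p ∈ polarCoord.target, HasFDerivWithinAt polarCoord.symm (B p) polarCoord.target p :=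
    fun p _ => (hasFDerivAt_polarCoord_symm p).hasFDerivWithinAt
  have B_det : ∀ p, (B p).det = p.1 := by
    intro p
    conv_rhs => rw [← one_mul p.1, ← Real.cos_sq_add_sin_sq p.2]
    simp only [hB, neg_mul, LinearMap.det_toContinuousLinearMap, LinearMap.det_toLin,
      Matrix.det_fin_two_of, sub_neg_eq_add]
    ring
  have hinj : Set.InjOn polarCoord.symm polarCoord.target := polarCoord.symm.injOn
  have key := (integrableOn_image_iff_integrableOn_abs_det_fderiv_smul volume
    polarCoord.open_target.measurableSet A hinj
    (fun q : ℝ × ℝ => F (Complex.measurableEquivRealProd.symm q))).1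
  rw [polarCoord.symm_image_target_eq_source] at key
  have h2 := key hG.integrableOn
  apply IntegrableOn.congr_fun h2 ?_ polarCoord.open_target.measurableSet
  intro p hp
  dsimp only
  rw [B_det, abs_of_pos (mem_Ioi.1 hp.1), smul_eq_mul]
  rfl

lemma polar_iterated (F : ℂ → ℝ) (hF : Integrable F)
    (hzero : ∀ z : ℂ, 1 ≤ ‖z‖ → F z = 0) :
    (∫ z, F z)
      = ∫ r in Ioo (0:ℝ) 1, ∫ θ in Ioo (-Real.pi) Real.pi,
          r * F (Complex.polarCoord.symm (r, θ)) := by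
  have hsm : ∀ p : ℝ × ℝ, p.1 • F (Complex.polarCoord.symm p) = p.1 * F (Complex.polarCoord.symm p) :=
    fun p => rfl
  rw [← Complex.integral_comp_polarCoord_symm F]
  have hE : (Ioo (0:ℝ) 1 ×ˢ Ioo (-Real.pi) Real.pi) ⊆ polarCoord.target := by
    rintro ⟨r, θ⟩ ⟨hr, hθ⟩
    exact ⟨mem_Ioi.2 hr.1, hθ⟩
  have hdiff : ∀ p ∈ polarCoord.target \ (Ioo (0:ℝ) 1 ×ˢ Ioo (-Real.pi) Real.pi),
      p.1 • F (Complex.polarCoord.symm p) = 0 := by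
    rintro ⟨r, θ⟩ ⟨⟨hr, hθ⟩, hne⟩
    have hr' : (0:ℝ) < r := mem_Ioi.1 hr
    have : ¬ (r ∈ Ioo (0:ℝ) 1) := by
      intro hmem
      exact hne ⟨hmem, hθ⟩
    have hr1 : (1:ℝ) ≤ r := by
      rcases lt_or_ge r 1 with h | h
      · exact absurd ⟨hr', h⟩ this
      · exact h
    have : F (Complex.polarCoord.symm (r, θ)) = 0 := by
      apply hzero
      rw [Complex.norm_polarCoord_symm]
      simpa [abs_of_pos hr'] using hr1
    rw [hsm, this, mul_zero]
  rw [setIntegral_eq_of_subset_of_forall_diff_eq_zero polarCoord.open_target.measurableSet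
    hE hdiff]
  have hint : IntegrableOn (fun p : ℝ × ℝ => p.1 * F (Complex.polarCoord.symm p))
      (Ioo (0:ℝ) 1 ×ˢ Ioo (-Real.pi) Real.pi) :=
    (polar_integrableOn F hF).mono_set hE
  rw [show (∫ p in Ioo (0:ℝ) 1 ×ˢ Ioo (-Real.pi) Real.pi, p.1 • F (Complex.polarCoord.symm p))
      = ∫ p in Ioo (0:ℝ) 1 ×ˢ Ioo (-Real.pi) Real.pi, p.1 * F (Complex.polarCoord.symm p) from rfl]
  rw [Measure.volume_eq_prod, ← Measure.prod_restrict]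
  rw [MeasureTheory.integral_prod]
  rw [Measure.prod_restrict, ← Measure.volume_eq_prod]
  exact hint
lemma central (φ : ℂ → ℂ) (hφ : DifferentiableOn ℂ φ (ball (0:ℂ) 1))
    (hint : IntegrableOn (fun z => ‖φ z‖ ^ 2 * ((1 - ‖z‖ ^ 2) ^ 2 / 4)) (ball (0:ℂ) 1)) :
    ∀ z ∈ ball (0:ℂ) 1, ‖φ z‖ * ((1 - ‖z‖ ^ 2) ^ 2 / 4) ≤
      Real.sqrt (3 / (4 * Real.pi)) *
        Real.sqrt (∫ w in ball (0:ℂ) 1, ‖φ w‖ ^ 2 * ((1 - ‖w‖ ^ 2) ^ 2 / 4)) := by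
  intro z hz
  set g : ℂ → ℝ := fun w => ‖φ w‖ ^ 2 * ((1 - ‖w‖ ^ 2) ^ 2 / 4) with hg
  set J : ℝ := ∫ w in ball (0:ℂ) 1, g w with hJ
  have hπ : (0:ℝ) < Real.pi := Real.pi_pos
  have hJ0 : 0 ≤ J := setIntegral_nonneg measurableSet_ball (fun w _ => by
    rw [hg]; positivity)
  -- power series of φ
  have hps : ∀ r : ℝ≥0, 0 < r → (r:ℝ) < 1 →
      HasFPowerSeriesOnBall φ (cauchyPowerSeries φ 0 (r:ℝ)) 0 r := by
    intro r h0 h1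
    exact (hφ.mono (closedBall_subset_ball h1)).hasFPowerSeriesOnBall h0
  set p : FormalMultilinearSeries ℂ ℂ ℂ := cauchyPowerSeries φ 0 ((1:ℝ)/2) with hp
  set a : ℕ → ℝ := fun n => ‖p.coeff n‖ with ha
  have huniq : ∀ r : ℝ, 0 < r → r < 1 → cauchyPowerSeries φ 0 r = p := by
    intro r h0 h1
    have h := (hps ⟨r, h0.le⟩ (by exact_mod_cast h0) h1).hasFPowerSeriesAt
    have h2 := (hps ⟨(1:ℝ)/2, by norm_num⟩ (NNReal.coe_pos.1 (show (0:ℝ) < 1/2 by norm_num))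
      (show (1:ℝ)/2 < 1 by norm_num)).hasFPowerSeriesAt
    exact h.eq_formalMultilinearSeries h2
  -- integrated Bessel inequality
  set F : ℂ → ℝ := (ball (0:ℂ) 1).indicator g with hF
  have hFint : Integrable F := by
    rw [hF]
    exact (integrable_indicator_iff measurableSet_ball).2 hint
  have hF0 : ∀ w : ℂ, 1 ≤ ‖w‖ → F w = 0 := by
    intro w hw
    rw [hF]
    apply indicator_of_notMem
    rw [mem_ball_zero_iff]
    linarith
  have hJeq : J = ∫ r in Ioo (0:ℝ) 1, ∫ θ in Ioo (-Real.pi) Real.pi,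
      r * F (Complex.polarCoord.symm (r, θ)) := by
    rw [hJ, ← MeasureTheory.integral_indicator measurableSet_ball, ← hF]
    exact polar_iterated F hFint hF0
  have keyN : ∀ N : ℕ, (Real.pi/12) *
      ∑ n ∈ Finset.range N, (a n)^2 / (((n+3).choose 3 : ℕ) : ℝ) ≤ J := by
    intro N
    -- pointwise-in-r lower bound
    have hminor : ∀ r ∈ Ioo (0:ℝ) 1,
        (Real.pi/2) * ∑ n ∈ Finset.range N, (a n)^2 * (r^(2*n+1) * (1-r^2)^2)
          ≤ ∫ θ in Ioo (-Real.pi) Real.pi, r * F (Complex.polarCoord.symm (r, θ)) := by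
      rintro r ⟨hr0, hr1⟩
      set f : ℝ → ℂ := fun θ => φ (r * Complex.exp (θ * Complex.I)) with hfdef
      have hnrm : ∀ θ : ℝ, ‖(r:ℂ) * Complex.exp (θ * Complex.I)‖ = r := by
        intro θ
        rw [norm_mul, Complex.norm_real, Real.norm_eq_abs, _root_.abs_of_pos hr0,
          Complex.norm_exp_ofReal_mul_I, mul_one]
      have hmem : ∀ θ : ℝ, (r:ℂ) * Complex.exp (θ * Complex.I) ∈ ball (0:ℂ) 1 := by
        intro θ
        rw [mem_ball_zero_iff, hnrm]
        exact hr1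
      have hcont : Continuous f := by
        apply hφ.continuousOn.comp_continuous
          (continuous_const.mul (Complex.continuous_exp.comp
            (Complex.continuous_ofReal.mul continuous_const))) hmem
      have hcoef : ∀ n : ℕ,
          (∫ θ in (0:ℝ)..2*Real.pi, Complex.exp (-(n:ℂ) * θ * Complex.I) * f θ)
            = 2*Real.pi * (p.coeff n * (r:ℂ)^n) := by
        intro n
        have h := coeff_circle φ r hr0 n
        rw [huniq r hr0 hr1] at h
        exact h
      have hbes := bessel f hcont N (fun n => p.coeff n * (r:ℂ)^n) hcoef
      have hnorm2 : ∀ n : ℕ, ‖p.coeff n * (r:ℂ)^n‖^2 = (a n)^2 * r^(2*n) := by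
        intro n
        rw [norm_mul, norm_pow, Complex.norm_real, Real.norm_eq_abs, _root_.abs_of_pos hr0,
          mul_pow, ← pow_mul, mul_comm n 2]
      rw [Finset.sum_congr rfl (fun n _ => hnorm2 n)] at hbes
      -- identify the θ-integral
      have hFpt : ∀ θ ∈ Ioo (-Real.pi) Real.pi,
          r * F (Complex.polarCoord.symm (r, θ)) = r * ((1-r^2)^2/4) * ‖f θ‖^2 := by
        intro θ _
        have hsymm : Complex.polarCoord.symm (r, θ) = (r:ℂ) * Complex.exp (θ * Complex.I) := by
          rw [Complex.polarCoord_symm_apply, Complex.exp_mul_I]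
          push_cast
          ring
        rw [hsymm, hF, indicator_of_mem (hmem θ), hg]
        simp only [hnrm θ]
        rw [hfdef]
        ring
      have hIoo : (∫ θ in Ioo (-Real.pi) Real.pi, r * F (Complex.polarCoord.symm (r, θ)))
          = r * ((1-r^2)^2/4) * ∫ θ in (0:ℝ)..2*Real.pi, ‖f θ‖^2 := by
        rw [setIntegral_congr_fun measurableSet_Ioo hFpt, MeasureTheory.integral_const_mul]
        congr 1
        rw [← integral_Ioc_eq_integral_Ioo,
          ← intervalIntegral.integral_of_le (by linarith : -Real.pi ≤ Real.pi)]
        have hper : Function.Periodic (fun θ : ℝ => ‖f θ‖^2) (2*Real.pi) := by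
          intro θ
          have hexp2 : Complex.exp (((θ + 2*Real.pi : ℝ) : ℂ) * Complex.I)
              = Complex.exp ((θ:ℂ) * Complex.I) := by
            push_cast
            rw [add_mul, Complex.exp_add, Complex.exp_two_pi_mul_I, mul_one]
          simp only [hfdef, hexp2]
        have hshift := hper.intervalIntegral_add_eq (-Real.pi) 0
        rw [show -Real.pi + 2*Real.pi = Real.pi by ring, zero_add] at hshift
        exact hshift
      rw [hIoo]
      have hstep : (Real.pi/2) * ∑ n ∈ Finset.range N, (a n)^2 * (r^(2*n+1) * (1-r^2)^2)
          = (r * ((1-r^2)^2/4)) * (2*Real.pi * ∑ n ∈ Finset.range N, (a n)^2 * r^(2*n)) := by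
        rw [Finset.mul_sum, Finset.mul_sum, Finset.mul_sum]
        refine Finset.sum_congr rfl fun n _ => ?_
        show (Real.pi/2) * ((a n)^2 * (r^(2*n+1) * (1-r^2)^2))
            = r * ((1-r^2)^2/4) * (2*Real.pi * ((a n)^2 * r^(2*n)))
        rw [pow_succ]
        ring
      rw [hstep]
      exact mul_le_mul_of_nonneg_left hbes (by positivity)
    -- integral of the minorant
    have hmint : (∫ r in Ioo (0:ℝ) 1,
        (Real.pi/2) * ∑ n ∈ Finset.range N, (a n)^2 * (r^(2*n+1) * (1-r^2)^2))
        = (Real.pi/12) * ∑ n ∈ Finset.range N, (a n)^2 / (((n+3).choose 3 : ℕ) : ℝ) := by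
      rw [← integral_Ioc_eq_integral_Ioo,
        ← intervalIntegral.integral_of_le (by norm_num : (0:ℝ) ≤ 1),
        intervalIntegral.integral_const_mul,
        intervalIntegral.integral_finset_sum (fun n _ =>
          (show Continuous (fun r : ℝ => (a n)^2 * (r^(2*n+1) * (1-r^2)^2)) from continuous_const.mul ((continuous_pow _).mul
            ((continuous_const.sub (continuous_pow 2)).pow 2))).intervalIntegrable _ _)]
      have hterm : ∀ n ∈ Finset.range N,
          (∫ r in (0:ℝ)..1, (a n)^2 * (r^(2*n+1) * (1-r^2)^2))
          = (a n)^2 * (1/(((n:ℝ)+1)*((n:ℝ)+2)*((n:ℝ)+3))) := by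
        intro n _
        rw [intervalIntegral.integral_const_mul, radial_int n]
      rw [Finset.sum_congr rfl hterm, Finset.mul_sum, Finset.mul_sum]
      refine Finset.sum_congr rfl fun n _ => ?_
      have hc := choose3R n
      have hcpos : (0:ℝ) < (((n+3).choose 3 : ℕ) : ℝ) := by
        exact_mod_cast Nat.choose_pos (by omega)
      rw [show ((n:ℝ)+1)*((n:ℝ)+2)*((n:ℝ)+3) = (((n+3).choose 3 : ℕ) : ℝ) * 6 from hc.symm]
      simp only [one_div, mul_inv]
      ring
    -- integrability of both sides
    have hm_int : IntegrableOn (fun r : ℝ =>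
        (Real.pi/2) * ∑ n ∈ Finset.range N, (a n)^2 * (r^(2*n+1) * (1-r^2)^2)) (Ioo (0:ℝ) 1) := by
      have hcont : Continuous (fun r : ℝ =>
          (Real.pi/2) * ∑ n ∈ Finset.range N, (a n)^2 * (r^(2*n+1) * (1-r^2)^2)) := by
        apply continuous_const.mul
        apply continuous_finset_sum
        intro n _
        exact continuous_const.mul ((continuous_pow _).mul
          ((continuous_const.sub (continuous_pow 2)).pow 2))
      exact ((hcont.intervalIntegrable 0 1).1).mono_set Ioo_subset_Ioc_self
    have hinner_int : IntegrableOn (fun r : ℝ =>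
        ∫ θ in Ioo (-Real.pi) Real.pi, r * F (Complex.polarCoord.symm (r, θ))) (Ioo (0:ℝ) 1) := by
      have hprod : IntegrableOn (fun q : ℝ × ℝ => q.1 * F (Complex.polarCoord.symm q))
          (Ioo (0:ℝ) 1 ×ˢ Ioo (-Real.pi) Real.pi) := by
        apply (polar_integrableOn F hFint).mono_set
        rintro ⟨r, θ⟩ ⟨h1, h2⟩
        exact ⟨mem_Ioi.2 h1.1, h2⟩
      rw [IntegrableOn, Measure.volume_eq_prod, ← Measure.prod_restrict] at hprod
      exact hprod.integral_prod_left
    calc (Real.pi/12) * ∑ n ∈ Finset.range N, (a n)^2 / (((n+3).choose 3 : ℕ) : ℝ)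
        = ∫ r in Ioo (0:ℝ) 1,
            (Real.pi/2) * ∑ n ∈ Finset.range N, (a n)^2 * (r^(2*n+1) * (1-r^2)^2) := hmint.symm
      _ ≤ ∫ r in Ioo (0:ℝ) 1, ∫ θ in Ioo (-Real.pi) Real.pi,
            r * F (Complex.polarCoord.symm (r, θ)) :=
          setIntegral_mono_on hm_int hinner_int measurableSet_Ioo hminor
      _ = J := hJeq.symm
  -- Cauchy-Schwarz and summation
  have ht1 : ‖z‖ < 1 := mem_ball_zero_iff.1 hz
  have ht0 : (0:ℝ) ≤ ‖z‖ := norm_nonneg z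
  set t : ℝ := ‖z‖ with htdef
  have ht2 : t^2 < 1 := by nlinarith
  have h1t2 : (0:ℝ) < 1 - t^2 := by linarith
  -- power series at z
  set R : ℝ≥0 := ⟨(1+t)/2, by positivity⟩ with hRdef
  have hRr : (R:ℝ) = (1+t)/2 := rfl
  have hR0 : 0 < R := by
    rw [← NNReal.coe_lt_coe, hRr]
    norm_num
    linarith
  have hR1 : (R:ℝ) < 1 := by rw [hRr]; linarith
  have hpz : HasFPowerSeriesOnBall φ p 0 R := by
    have h := hps R hR0 hR1
    rwa [hRr, huniq ((1+t)/2) (by positivity) (by linarith)] at h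
  have hzmem : z ∈ EMetric.ball (0:ℂ) R := by
    change z ∈ Metric.eball (0:ℂ) (R:ENNReal)
    rw [Metric.emetric_ball_nnreal, mem_ball_zero_iff, hRr]
    linarith [ht1]
  have hsum : HasSum (fun n => p n fun _ => z) (φ z) := by
    have h := hpz.hasSum_sub hzmem
    simpa using h
  have hrad : (↑(‖z‖₊) : ENNReal) < p.radius := by
    refine lt_of_lt_of_le ?_ hpz.r_le
    rw [ENNReal.coe_lt_coe, ← NNReal.coe_lt_coe, coe_nnnorm, hRr]
    linarith [ht1]
  have hsummable : Summable (fun n => ‖p n‖ * t^n) := by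
    have h := p.summable_norm_mul_pow hrad
    simpa [coe_nnnorm] using h
  have hsa : Summable (fun n => a n * t^n) := by
    apply hsummable.congr
    intro n
    rw [ha, FormalMultilinearSeries.norm_apply_eq_norm_coef]
  have hpt : ∀ n : ℕ, ‖p n fun _ => z‖ = a n * t^n := by
    intro n
    rw [FormalMultilinearSeries.apply_eq_pow_smul_coeff, norm_smul, norm_pow, ha, htdef,
      mul_comm]
  have hφz : ‖φ z‖ ≤ ∑' n, a n * t^n := by
    rw [← hsum.tsum_eq]
    calc ‖∑' n, p n fun _ => z‖ ≤ ∑' n, ‖p n fun _ => z‖ :=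
          norm_tsum_le_tsum_norm (hsa.congr (fun n => (hpt n).symm))
      _ = ∑' n, a n * t^n := tsum_congr hpt
  set C2 : ℝ := Real.sqrt (12*J/Real.pi) * ((1-t^2)⁻¹)^2 with hC2
  have hSN : ∀ N : ℕ, ∑ n ∈ Finset.range N, a n * t^n ≤ C2 := by
    intro N
    have hCpos : ∀ n : ℕ, (0:ℝ) < (((n+3).choose 3 : ℕ) : ℝ) := fun n => by
      exact_mod_cast Nat.choose_pos (by omega)
    have hcs := Finset.sum_mul_sq_le_sq_mul_sq (Finset.range N)
      (fun n => a n / Real.sqrt (((n+3).choose 3 : ℕ) : ℝ))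
      (fun n => Real.sqrt (((n+3).choose 3 : ℕ) : ℝ) * t^n)
    have hprod : ∀ n : ℕ, (a n / Real.sqrt (((n+3).choose 3 : ℕ) : ℝ)) *
        (Real.sqrt (((n+3).choose 3 : ℕ) : ℝ) * t^n) = a n * t^n := by
      intro n
      have hs0 : Real.sqrt (((n+3).choose 3 : ℕ) : ℝ) ≠ 0 :=
        (Real.sqrt_pos.2 (hCpos n)).ne'
      field_simp
    have hsq1 : ∀ n : ℕ, (a n / Real.sqrt (((n+3).choose 3 : ℕ) : ℝ))^2
        = (a n)^2 / (((n+3).choose 3 : ℕ) : ℝ) := by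
      intro n
      rw [div_pow, Real.sq_sqrt (hCpos n).le]
    have hsq2 : ∀ n : ℕ, (Real.sqrt (((n+3).choose 3 : ℕ) : ℝ) * t^n)^2
        = (((n+3).choose 3 : ℕ) : ℝ) * (t^2)^n := by
      intro n
      rw [mul_pow, Real.sq_sqrt (hCpos n).le, ← pow_mul, mul_comm n 2, pow_mul]
    rw [Finset.sum_congr rfl (fun n _ => hprod n)] at hcs
    rw [Finset.sum_congr rfl (fun n _ => hsq1 n), Finset.sum_congr rfl (fun n _ => hsq2 n)] at hcs
    have hA : ∑ n ∈ Finset.range N, (a n)^2 / (((n+3).choose 3 : ℕ) : ℝ) ≤ 12*J/Real.pi := by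
      have h := keyN N
      rw [le_div_iff₀ hπ]
      calc (∑ n ∈ Finset.range N, (a n)^2 / (((n+3).choose 3 : ℕ) : ℝ)) * Real.pi
          = 12 * (Real.pi/12 * ∑ n ∈ Finset.range N, (a n)^2 / (((n+3).choose 3 : ℕ) : ℝ)) := by
            ring
        _ ≤ 12 * J := by linarith [h]
    have hGb : ∑ n ∈ Finset.range N, (((n+3).choose 3 : ℕ) : ℝ) * (t^2)^n ≤ ((1-t^2)⁻¹)^4 :=
      geom_sum_bound N (t^2) (by positivity) ht2
    have hsq : (∑ n ∈ Finset.range N, a n * t^n)^2 ≤ (12*J/Real.pi) * ((1-t^2)⁻¹)^4 := by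
      refine le_trans hcs ?_
      refine mul_le_mul hA hGb ?_ (div_nonneg (by linarith) hπ.le)
      apply Finset.sum_nonneg
      intro n _
      positivity
    have hS0 : (0:ℝ) ≤ ∑ n ∈ Finset.range N, a n * t^n := by
      apply Finset.sum_nonneg
      intro n _
      have : 0 ≤ a n := norm_nonneg _
      positivity
    have hsqrt := Real.sqrt_le_sqrt hsq
    rw [Real.sqrt_sq hS0, Real.sqrt_mul (div_nonneg (by linarith) hπ.le),
      show ((1-t^2)⁻¹)^4 = (((1-t^2)⁻¹)^2)^2 by ring, Real.sqrt_sq (by positivity)] at hsqrt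
    exact hsqrt
  have htsum : ∑' n, a n * t^n ≤ C2 := by
    apply Summable.tsum_le_of_sum_le hsa
    intro s
    obtain ⟨N, hsub⟩ := s.exists_nat_subset_range
    calc ∑ n ∈ s, a n * t^n ≤ ∑ n ∈ Finset.range N, a n * t^n := by
          apply Finset.sum_le_sum_of_subset_of_nonneg hsub
          intro n _ _
          have : 0 ≤ a n := norm_nonneg _
          positivity
      _ ≤ C2 := hSN N
  have hfin : ‖φ z‖ ≤ C2 := le_trans hφz htsum
  calc ‖φ z‖ * ((1-‖z‖^2)^2/4) ≤ C2 * ((1-t^2)^2/4) := by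
        apply mul_le_mul_of_nonneg_right hfin
        positivity
    _ = Real.sqrt (12*J/Real.pi) / 4 := by
        rw [hC2]
        field_simp
    _ = Real.sqrt (3/(4*Real.pi)) * Real.sqrt J := by
        rw [show (4:ℝ) = Real.sqrt 16 by
            rw [show (16:ℝ) = 4^2 by norm_num, Real.sqrt_sq (by norm_num : (0:ℝ) ≤ 4)],
          ← Real.sqrt_div (div_nonneg (by linarith) hπ.le), ← Real.sqrt_mul (by positivity)]
        congr 1
        have h16 : Real.sqrt 16 = 4 := by
          rw [show (16:ℝ) = 4^2 by norm_num, Real.sqrt_sq (by norm_num : (0:ℝ) ≤ 4)]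
        field_simp [h16]
        ring

/-- The weighted sup-norm of a holomorphic function on the disk is controlled by its
weighted `L²`-norm: `sup |φ| ρ_𝔻⁻¹ ≤ √(3/(4π)) ‖φ‖₂` where `ρ_𝔻(z) = 4/(1-|z|²)²`.
In particular `A₂(𝔻) ⊆ A_∞(𝔻)`. -/
theorem a2_subset_ainf
    (φ : ℂ → ℂ)
    (hφ : DifferentiableOn ℂ φ (ball (0:ℂ) 1))
    (hint : IntegrableOn (fun z => ‖φ z‖ ^ 2 * ((1 - ‖z‖ ^ 2) ^ 2 / 4)) (ball (0:ℂ) 1)) :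
    (∀ z ∈ ball (0:ℂ) 1,
      ‖φ z‖ * ((1 - ‖z‖ ^ 2) ^ 2 / 4) ≤
        Real.sqrt (3 / (4 * Real.pi)) *
          Real.sqrt (∫ w in ball (0:ℂ) 1, ‖φ w‖ ^ 2 * ((1 - ‖w‖ ^ 2) ^ 2 / 4))) ∧
    BddAbove ((fun z => ‖φ z‖ * ((1 - ‖z‖ ^ 2) ^ 2 / 4)) '' ball (0:ℂ) 1) := by
  refine ⟨central φ hφ hint, ?_⟩
  refine ⟨Real.sqrt (3 / (4 * Real.pi)) *
    Real.sqrt (∫ w in ball (0:ℂ) 1, ‖φ w‖ ^ 2 * ((1 - ‖w‖ ^ 2) ^ 2 / 4)), ?_⟩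
  rintro y ⟨z, hz, rfl⟩
  exact central φ hφ hint z hz
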